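/- For s ∈ (0,1) and |z| < 1 with z ≠ 0, the derivative with respect to z of z · ₅F₄(2−s, 3/2, 1+s, 1, 1; 2, 2, 2, 2; z) equals (2/(s(1−s)z)) · (₃F₂(1−s, 1/2, s; 1, 1; z) − 1). -/

import Mathlib

open Real Filter Set

noncomputable def poch (a : ℝ) (n : ℕ) : ℝ := ∏ i ∈ Finset.range n, (a + i)

noncomputable def F21 (a b c z : ℝ) : ℝ :=
  ∑' n : ℕ, poch a n * poch b n / (poch c n * (n.factorial : ℝ)) * z ^ n

noncomputable def F32 (a1 a2 a3 b1 b2 z : ℝ) : ℝ :=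
  ∑' n : ℕ, poch a1 n * poch a2 n * poch a3 n /
    (poch b1 n * poch b2 n * (n.factorial : ℝ)) * z ^ n

noncomputable def F54 (a1 a2 a3 a4 a5 b1 b2 b3 b4 z : ℝ) : ℝ :=
  ∑' n : ℕ, poch a1 n * poch a2 n * poch a3 n * poch a4 n * poch a5 n /
    (poch b1 n * poch b2 n * poch b3 n * poch b4 n * (n.factorial : ℝ)) * z ^ n

noncomputable def J (t : ℝ) : ℝ :=
  (1 / Real.pi ^ 3) *
    ∫ x in (0:ℝ)..Real.pi, ∫ y in (0:ℝ)..Real.pi, ∫ z in (0:ℝ)..Real.pi,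
      Real.log (t - Real.cos x - Real.cos y - Real.cos z +
        Real.cos x * Real.cos y * Real.cos z)

noncomputable def G (t : ℝ) : ℝ :=
  (1 / Real.pi ^ 3) *
    ∫ x in (0:ℝ)..Real.pi, ∫ y in (0:ℝ)..Real.pi, ∫ z in (0:ℝ)..Real.pi,
      (t - Real.cos x - Real.cos y - Real.cos z +
        Real.cos x * Real.cos y * Real.cos z)⁻¹


lemma poch_zero (a : ℝ) : poch a 0 = 1 := by simp [poch]

lemma poch_succ (a : ℝ) (n : ℕ) : poch a (n+1) = poch a n * (a + n) := by
  simp [poch, Finset.prod_range_succ]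

lemma poch_shift (a : ℝ) (n : ℕ) : poch a (n+1) = a * poch (a+1) n := by
  rw [poch, poch, Finset.prod_range_succ']
  simp only [Nat.cast_add, Nat.cast_one]
  rw [mul_comm]
  congr 1
  · push_cast; ring
  · apply Finset.prod_congr rfl
    intro i _
    push_cast; ring

lemma poch_pos {a : ℝ} (ha : 0 < a) (n : ℕ) : 0 < poch a n := by
  apply Finset.prod_pos
  intro i _
  positivity

lemma poch_mono {a b : ℝ} (ha : 0 < a) (hab : a ≤ b) (n : ℕ) : poch a n ≤ poch b n := by
  apply Finset.prod_le_prod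
  · intro i _; positivity
  · intro i _; linarith

lemma poch_one (n : ℕ) : poch 1 n = n.factorial := by
  induction n with
  | zero => simp [poch_zero]
  | succ k ih =>
    rw [poch_succ, ih, Nat.factorial_succ]
    push_cast; ring

lemma poch_two (n : ℕ) : poch 2 n = (n+1).factorial := by
  induction n with
  | zero => simp [poch_zero]
  | succ k ih =>
    rw [poch_succ, ih]
    have h : (k + 1 + 1).factorial = (k + 2) * (k+1).factorial := rfl
    rw [h]
    push_cast; ring

noncomputable def cc (s : ℝ) (n : ℕ) : ℝ :=
  poch (2 - s) n * poch (3/2) n * poch (1 + s) n * poch 1 n * poch 1 n /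
    (poch 2 n * poch 2 n * poch 2 n * poch 2 n * (n.factorial : ℝ))

noncomputable def dd (s : ℝ) (n : ℕ) : ℝ :=
  poch (1 - s) n * poch (1/2) n * poch s n /
    (poch 1 n * poch 1 n * (n.factorial : ℝ))

lemma key (s : ℝ) (hs0 : 0 < s) (hs1 : s < 1) (n : ℕ) :
    (2 / (s * (1 - s))) * dd s (n+1) = ((n:ℝ)+1) * cc s n := by
  have e1 : 1 - s + 1 = 2 - s := by ring
  have e2 : (1/2 : ℝ) + 1 = 3/2 := by ring
  have e3 : s + 1 = 1 + s := by ring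
  rw [dd, cc, poch_shift (1-s), poch_shift (1/2), poch_shift s, e1, e2, e3,
    poch_one, poch_one, poch_two, Nat.factorial_succ]
  have h1 : (0:ℝ) < poch (2-s) n := poch_pos (by linarith) n
  have h2 : (0:ℝ) < poch (3/2) n := poch_pos (by norm_num) n
  have h3 : (0:ℝ) < poch (1+s) n := poch_pos (by linarith) n
  have hf : (0:ℝ) < (n.factorial : ℝ) := by positivity
  have hs' : (1:ℝ) - s ≠ 0 := by linarith
  field_simp
  push_cast; ring

lemma cc_nonneg (s : ℝ) (hs0 : 0 < s) (hs1 : s < 1) (n : ℕ) : 0 ≤ cc s n := by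
  have h1 : (0:ℝ) < poch (2-s) n := poch_pos (by linarith) n
  have h2 : (0:ℝ) < poch (3/2) n := poch_pos (by norm_num) n
  have h3 : (0:ℝ) < poch (1+s) n := poch_pos (by linarith) n
  have h4 : (0:ℝ) < poch 1 n := poch_pos one_pos n
  have h5 : (0:ℝ) < poch 2 n := poch_pos two_pos n
  have hf : (0:ℝ) < (n.factorial : ℝ) := by positivity
  rw [cc]
  positivity

lemma cc_bound (s : ℝ) (hs0 : 0 < s) (hs1 : s < 1) (n : ℕ) :
    ((n:ℝ)+1) * cc s n ≤ 1 := by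
  have h1 : poch (2-s) n ≤ poch 2 n := poch_mono (by linarith) (by linarith) n
  have h2 : poch (3/2) n ≤ poch 2 n := poch_mono (by norm_num) (by norm_num) n
  have h3 : poch (1+s) n ≤ poch 2 n := poch_mono (by linarith) (by linarith) n
  have p1 : (0:ℝ) < poch (2-s) n := poch_pos (by linarith) n
  have p2 : (0:ℝ) < poch (3/2) n := poch_pos (by norm_num) n
  have p3 : (0:ℝ) < poch (1+s) n := poch_pos (by linarith) n
  have p4 : (0:ℝ) < poch 1 n := poch_pos one_pos n
  have p5 : (0:ℝ) < poch 2 n := poch_pos two_pos n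
  have hf : (0:ℝ) < (n.factorial : ℝ) := by positivity
  have hD : (0:ℝ) < poch 2 n * poch 2 n * poch 2 n * poch 2 n * (n.factorial : ℝ) := by
    positivity
  rw [cc, mul_div_assoc', div_le_one hD]
  have step : ((n:ℝ)+1) * (poch (2-s) n * poch (3/2) n * poch (1+s) n * poch 1 n * poch 1 n)
      ≤ ((n:ℝ)+1) * (poch 2 n * poch 2 n * poch 2 n * poch 1 n * poch 1 n) := by
    have hn : (0:ℝ) ≤ (n:ℝ) + 1 := by positivity
    gcongr
  refine step.trans (le_of_eq ?_)
  rw [poch_one, poch_two, Nat.factorial_succ]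
  push_cast
  ring

lemma cc_le_one (s : ℝ) (hs0 : 0 < s) (hs1 : s < 1) (n : ℕ) : cc s n ≤ 1 := by
  have h := cc_bound s hs0 hs1 n
  have h2 := cc_nonneg s hs0 hs1 n
  nlinarith [Nat.cast_nonneg (α := ℝ) n]

lemma dd_nonneg (s : ℝ) (hs0 : 0 < s) (hs1 : s < 1) (n : ℕ) : 0 ≤ dd s n := by
  have h1 : (0:ℝ) < poch (1-s) n := poch_pos (by linarith) n
  have h2 : (0:ℝ) < poch (1/2) n := poch_pos (by norm_num) n
  have h3 : (0:ℝ) < poch s n := poch_pos hs0 n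
  have h4 : (0:ℝ) < poch 1 n := poch_pos one_pos n
  have hf : (0:ℝ) < (n.factorial : ℝ) := by positivity
  rw [dd]; positivity

lemma dd_le_one (s : ℝ) (hs0 : 0 < s) (hs1 : s < 1) (n : ℕ) : dd s n ≤ 1 := by
  have h1 : poch (1-s) n ≤ poch 1 n := poch_mono (by linarith) (by linarith) n
  have h2 : poch (1/2) n ≤ poch 1 n := poch_mono (by norm_num) (by norm_num) n
  have h3 : poch s n ≤ poch 1 n := poch_mono hs0 (by linarith) n
  have p1 : (0:ℝ) < poch (1-s) n := poch_pos (by linarith) n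
  have p2 : (0:ℝ) < poch (1/2) n := poch_pos (by norm_num) n
  have p3 : (0:ℝ) < poch s n := poch_pos hs0 n
  have p4 : (0:ℝ) < poch 1 n := poch_pos one_pos n
  have hf : (0:ℝ) < (n.factorial : ℝ) := by positivity
  have hD : (0:ℝ) < poch 1 n * poch 1 n * (n.factorial : ℝ) := by positivity
  rw [dd, div_le_one hD]
  calc poch (1-s) n * poch (1/2) n * poch s n
      ≤ poch 1 n * poch 1 n * poch 1 n := by gcongr
    _ = poch 1 n * poch 1 n * (n.factorial : ℝ) := by rw [poch_one]

theorem stmt0 (s z : ℝ) (hs : s ∈ Set.Ioo (0:ℝ) 1) (hz : |z| < 1) (hz0 : z ≠ 0) :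
    deriv (fun w : ℝ => w * F54 (2 - s) (3/2) (1 + s) 1 1 2 2 2 2 w) z =
      (2 / (s * (1 - s) * z)) * (F32 (1 - s) (1/2) s 1 1 z - 1) := by
  obtain ⟨hs0, hs1⟩ := hs
  set r : ℝ := (1 + |z|) / 2 with hr
  have hzr : |z| < r := by rw [hr]; linarith [abs_nonneg z]
  have hr1 : r < 1 := by rw [hr]; linarith
  have hr0 : 0 < r := by positivity
  -- rewrite the function as a power series in cc
  have hfun : (fun w : ℝ => w * F54 (2 - s) (3/2) (1 + s) 1 1 2 2 2 2 w)
      = fun w : ℝ => ∑' n : ℕ, cc s n * w ^ (n+1) := by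
    funext w
    rw [F54, ← tsum_mul_left]
    apply tsum_congr
    intro n
    rw [cc, pow_succ]
    ring
  -- derivative of the power series
  have hderiv : HasDerivAt (fun w : ℝ => ∑' n : ℕ, cc s n * w ^ (n+1))
      (∑' n : ℕ, (((n:ℝ)+1) * cc s n * z ^ n)) z := by
    have hzball : z ∈ Metric.ball (0:ℝ) r := by simpa [Real.dist_eq] using hzr
    apply hasDerivAt_tsum_of_isPreconnected
      (u := fun n : ℕ => r ^ n) (t := Metric.ball (0:ℝ) r) (y₀ := z)
      (g' := fun (n : ℕ) (y : ℝ) => ((n:ℝ)+1) * cc s n * y ^ n)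
    · exact summable_geometric_of_lt_one hr0.le hr1
    · exact Metric.isOpen_ball
    · exact (convex_ball (0:ℝ) r).isPreconnected
    · intro n y _
      have h := (hasDerivAt_pow (n+1) y).const_mul (cc s n)
      convert h using 1
      case e'_4 => rfl
      simp only [Nat.add_sub_cancel]
      push_cast
      ring
    · intro n y hy
      have hya : |y| < r := by simpa [Real.dist_eq] using hy
      have hcc : (0:ℝ) ≤ ((n:ℝ)+1) * cc s n :=
        mul_nonneg (by positivity) (cc_nonneg s hs0 hs1 n)
      have h1 : ‖((n:ℝ)+1) * cc s n * y ^ n‖ = (((n:ℝ)+1) * cc s n) * |y| ^ n := by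
        rw [norm_mul, norm_pow, Real.norm_eq_abs, Real.norm_eq_abs, abs_of_nonneg hcc]
      rw [h1]
      calc (((n:ℝ)+1) * cc s n) * |y| ^ n
          ≤ 1 * r ^ n := mul_le_mul (cc_bound s hs0 hs1 n)
            (pow_le_pow_left₀ (abs_nonneg y) hya.le n) (by positivity) zero_le_one
        _ = r ^ n := one_mul _
    · exact hzball
    · -- summability at z
      apply Summable.of_norm_bounded (g := fun n : ℕ => |z| ^ (n+1))
      · exact ((summable_geometric_of_lt_one (abs_nonneg z) hz).mul_left |z|).congr
          (fun n => by rw [pow_succ]; ring)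
      · intro n
        rw [norm_mul, norm_pow, Real.norm_eq_abs, Real.norm_eq_abs,
          abs_of_nonneg (cc_nonneg s hs0 hs1 n)]
        calc cc s n * |z| ^ (n+1) ≤ 1 * |z| ^ (n+1) := by
              gcongr; exact cc_le_one s hs0 hs1 n
          _ = |z| ^ (n+1) := one_mul _
    · exact hzball
  rw [hfun, hderiv.deriv]
  -- now the RHS
  have hF32 : F32 (1 - s) (1/2) s 1 1 z = ∑' n : ℕ, dd s n * z ^ n := rfl
  have hsumd : Summable (fun n : ℕ => dd s n * z ^ n) := by
    apply Summable.of_norm_bounded (g := fun n : ℕ => |z| ^ n)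
    · exact summable_geometric_of_lt_one (abs_nonneg z) hz
    · intro n
      rw [norm_mul, norm_pow, Real.norm_eq_abs, Real.norm_eq_abs,
        abs_of_nonneg (dd_nonneg s hs0 hs1 n)]
      calc dd s n * |z| ^ n ≤ 1 * |z| ^ n := by
            gcongr; exact dd_le_one s hs0 hs1 n
        _ = |z| ^ n := one_mul _
  have hzero : dd s 0 * z ^ 0 = 1 := by simp [dd, poch_zero]
  have hsplit : F32 (1 - s) (1/2) s 1 1 z - 1
      = ∑' n : ℕ, dd s (n+1) * z ^ (n+1) := by
    rw [hF32, Summable.tsum_eq_zero_add hsumd, hzero]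
    ring
  rw [hsplit, ← tsum_mul_left]
  apply tsum_congr
  intro n
  have hk := key s hs0 hs1 n
  have hs' : (1:ℝ) - s ≠ 0 := by linarith
  have : (2 / (s * (1 - s) * z)) * (dd s (n+1) * z ^ (n+1))
      = ((2 / (s * (1 - s))) * dd s (n+1)) * z ^ n := by
    rw [pow_succ]
    field_simp
  rw [this, hk]
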